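/- Let p₁, p₂, q₁, q₂ : ℝ² → ℝ be differentiable functions, let c₁₁, c₁₂, c₂₁, c₂₂ be real constants, and let B_{jl} : ℝ² → ℝ (j,l ∈ {1,2}) be differentiable functions with ∂_{x₁}B_{jl} = p_l·q_j. Set A_{jl} = c_{jl} + B_{jl}, and suppose Δ₁ := A₁₁ is nowhere vanishing. Define φ₁ := p₂ − (p₁/Δ₁)·A₁₂ and ψ₁ := q₂ − (q₁/Δ₁)·A₂₁. Then ∂_{x₁}( (A₁₁A₂₂ − A₁₂A₂₁)/Δ₁ ) = φ₁·ψ₁; in particular, if Δ₂ is any antiderivative in x₁ of φ₁ψ₁, then Δ₁·Δ₂ differs from det(A) = A₁₁A₂₂ − A₁₂A₂₁ by a function of x₂ times Δ₁. -/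

import Mathlib

open MeasureTheory Filter Set

/-- Partial derivative with respect to the first coordinate on `ℝ²`. -/
noncomputable def D1 {E : Type*} [NormedAddCommGroup E] [NormedSpace ℝ E]
    (f : ℝ × ℝ → E) (x : ℝ × ℝ) : E :=
  deriv (fun t => f (t, x.2)) x.1

/-- The determinant identity behind the composition of two binary
Bäcklund transformations: with `∂₁B_{jl} = p_l q_j`, `A_{jl} = c_{jl} + B_{jl}`,
`Δ₁ = A₁₁` nowhere vanishing, `φ₁ = p₂ - (p₁/Δ₁)A₁₂` and `ψ₁ = q₂ - (q₁/Δ₁)A₂₁`, one has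
`∂₁(det A / Δ₁) = φ₁ψ₁`; in particular any `x₁`-antiderivative `Δ₂` of `φ₁ψ₁` satisfies
`Δ₁Δ₂ = det A + g(x₂)·Δ₁` for some function `g` of `x₂` alone. -/

lemma slice_hasDerivAt {f : ℝ × ℝ → ℝ} (hf : Differentiable ℝ f) (x : ℝ × ℝ) :
    HasDerivAt (fun t => f (t, x.2)) (D1 f x) x.1 := by
  have h : DifferentiableAt ℝ (fun t => f (t, x.2)) x.1 :=
    (hf (x.1, x.2)).comp x.1 (differentiableAt_id.prodMk (differentiableAt_const _))
  simpa [D1] using h.hasDerivAt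

theorem determinant_identity_two_backlund
    (p₁ p₂ q₁ q₂ : ℝ × ℝ → ℝ)
    (hp₁ : Differentiable ℝ p₁) (hp₂ : Differentiable ℝ p₂)
    (hq₁ : Differentiable ℝ q₁) (hq₂ : Differentiable ℝ q₂)
    (c₁₁ c₁₂ c₂₁ c₂₂ : ℝ)
    (B₁₁ B₁₂ B₂₁ B₂₂ : ℝ × ℝ → ℝ)
    (hB₁₁ : Differentiable ℝ B₁₁) (hB₁₂ : Differentiable ℝ B₁₂)
    (hB₂₁ : Differentiable ℝ B₂₁) (hB₂₂ : Differentiable ℝ B₂₂)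
    (hB₁₁d : ∀ x : ℝ × ℝ, D1 B₁₁ x = p₁ x * q₁ x)
    (hB₁₂d : ∀ x : ℝ × ℝ, D1 B₁₂ x = p₂ x * q₁ x)
    (hB₂₁d : ∀ x : ℝ × ℝ, D1 B₂₁ x = p₁ x * q₂ x)
    (hB₂₂d : ∀ x : ℝ × ℝ, D1 B₂₂ x = p₂ x * q₂ x)
    (A₁₁ A₁₂ A₂₁ A₂₂ : ℝ × ℝ → ℝ)
    (hA₁₁ : ∀ x, A₁₁ x = c₁₁ + B₁₁ x) (hA₁₂ : ∀ x, A₁₂ x = c₁₂ + B₁₂ x)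
    (hA₂₁ : ∀ x, A₂₁ x = c₂₁ + B₂₁ x) (hA₂₂ : ∀ x, A₂₂ x = c₂₂ + B₂₂ x)
    (hΔ₁0 : ∀ x, A₁₁ x ≠ 0)
    (φ₁ ψ₁ : ℝ × ℝ → ℝ)
    (hφ₁ : ∀ x, φ₁ x = p₂ x - p₁ x / A₁₁ x * A₁₂ x)
    (hψ₁ : ∀ x, ψ₁ x = q₂ x - q₁ x / A₁₁ x * A₂₁ x) :
    (∀ x : ℝ × ℝ,
      D1 (fun y => (A₁₁ y * A₂₂ y - A₁₂ y * A₂₁ y) / A₁₁ y) x = φ₁ x * ψ₁ x) ∧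
    (∀ Δ₂ : ℝ × ℝ → ℝ,
      (∀ x : ℝ × ℝ, HasDerivAt (fun t => Δ₂ (t, x.2)) (φ₁ x * ψ₁ x) x.1) →
      ∃ g : ℝ → ℝ, ∀ x : ℝ × ℝ,
        A₁₁ x * Δ₂ x = (A₁₁ x * A₂₂ x - A₁₂ x * A₂₁ x) + g x.2 * A₁₁ x) := by
  -- derivative facts for the A's along the slice
  have hAd : ∀ (f B : ℝ × ℝ → ℝ) (c : ℝ) (p q : ℝ × ℝ → ℝ),
      Differentiable ℝ B → (∀ x, D1 B x = p x * q x) → (∀ x, f x = c + B x) →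
      ∀ x : ℝ × ℝ, HasDerivAt (fun t => f (t, x.2)) (p x * q x) x.1 := by
    intro f B c p q hB hBd hf x
    have h := (slice_hasDerivAt hB x).const_add c
    rw [hBd x] at h
    convert h using 2 with t
    · rfl
    · rfl
    · rw [hf]
  have h11 := hAd A₁₁ B₁₁ c₁₁ p₁ q₁ hB₁₁ hB₁₁d hA₁₁
  have h12 := hAd A₁₂ B₁₂ c₁₂ p₂ q₁ hB₁₂ hB₁₂d hA₁₂
  have h21 := hAd A₂₁ B₂₁ c₂₁ p₁ q₂ hB₂₁ hB₂₁d hA₂₁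
  have h22 := hAd A₂₂ B₂₂ c₂₂ p₂ q₂ hB₂₂ hB₂₂d hA₂₂
  have key : ∀ x : ℝ × ℝ,
      HasDerivAt (fun t => (A₁₁ (t, x.2) * A₂₂ (t, x.2) - A₁₂ (t, x.2) * A₂₁ (t, x.2)) /
        A₁₁ (t, x.2)) (φ₁ x * ψ₁ x) x.1 := by
    intro x
    have hnum : HasDerivAt
        (fun t => A₁₁ (t, x.2) * A₂₂ (t, x.2) - A₁₂ (t, x.2) * A₂₁ (t, x.2))
        ((p₁ x * q₁ x) * A₂₂ x + A₁₁ x * (p₂ x * q₂ x) -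
          ((p₂ x * q₁ x) * A₂₁ x + A₁₂ x * (p₁ x * q₂ x))) x.1 :=
      ((h11 x).mul (h22 x)).sub ((h12 x).mul (h21 x))
    have h := hnum.div (h11 x) (hΔ₁0 x)
    convert h using 1
    · rfl
    · rfl
    · rfl
    rw [hφ₁, hψ₁]
    have hne := hΔ₁0 x
    field_simp
    ring
  constructor
  · intro x
    simpa [D1] using (key x).deriv
  · intro Δ₂ hΔ₂
    refine ⟨fun s => Δ₂ (0, s) -
      (A₁₁ (0, s) * A₂₂ (0, s) - A₁₂ (0, s) * A₂₁ (0, s)) / A₁₁ (0, s), fun x => ?_⟩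
    set F : ℝ × ℝ → ℝ := fun y => (A₁₁ y * A₂₂ y - A₁₂ y * A₂₁ y) / A₁₁ y with hF
    have hconst : ∀ t : ℝ, F (t, x.2) - Δ₂ (t, x.2) = F (0, x.2) - Δ₂ (0, x.2) := by
      intro t
      have hderiv : ∀ τ : ℝ, HasDerivAt (fun u => F (u, x.2) - Δ₂ (u, x.2)) 0 τ := by
        intro τ
        have h1 := key (τ, x.2)
        have h2 := hΔ₂ (τ, x.2)
        have h3 := h1.sub h2
        rw [sub_self] at h3
        exact h3
      exact is_const_of_deriv_eq_zero
        (fun τ => (hderiv τ).differentiableAt) (fun τ => (hderiv τ).deriv) t 0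
    have hx := hconst x.1
    have hne := hΔ₁0 x
    have hFx : A₁₁ x * F x = A₁₁ x * A₂₂ x - A₁₂ x * A₂₁ x := by
      rw [hF]; field_simp
    have : Δ₂ x = F x + (Δ₂ (0, x.2) - F (0, x.2)) := by
      have : F x - Δ₂ x = F (0, x.2) - Δ₂ (0, x.2) := by
        simpa using hx
      linarith
    rw [this]
    rw [hF] at hFx ⊢
    ring_nf
    ring_nf at hFx
    nlinarith [hFx]
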